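/- Let p be a prime and n ≥ 5, V = F_p^n, W = F_p^{n−3}. Then the sum, over all alternating bilinear maps B : V × V → W, of the number of bad subspaces for B of dimension at least 4, is at most 16 (n−4) p^{4−n} times the total number of alternating bilinear maps B : V × V → W. In particular, the expected number of bad subspaces of dimension at least 4 for a uniformly random alternating bilinear map tends to 0 as either n → ∞ or p → ∞. -/
import Mathlib


open Filter

/-- The type of alternating bilinear maps `B : F_p^n × F_p^n → F_p^{n-3}`,
i.e. bilinear maps satisfying `B (v, v) = 0` for all `v`. -/
def AltMap (p n : ℕ) :=
  {B : (Fin n → ZMod p) →ₗ[ZMod p] (Fin n → ZMod p) →ₗ[ZMod p] (Fin (n - 3) → ZMod p) //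
    ∀ v, B v v = 0}

/-- `B(H, H)`: the linear span in `W` of `{B (x, y) : x, y ∈ H}`. -/
def pairSpan {p n : ℕ} (B : AltMap p n) (H : Submodule (ZMod p) (Fin n → ZMod p)) :
    Submodule (ZMod p) (Fin (n - 3) → ZMod p) :=
  Submodule.span (ZMod p) {w | ∃ x ∈ H, ∃ y ∈ H, B.1 x y = w}

/-- A proper subspace `H < V` is *bad* for `B` if
`dim W - dim B(H, H) ≥ dim V - dim H`. -/
def IsBad {p n : ℕ} (B : AltMap p n) (H : Submodule (ZMod p) (Fin n → ZMod p)) : Prop :=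
  H ≠ ⊤ ∧
    Module.finrank (ZMod p) (Fin (n - 3) → ZMod p)
        - Module.finrank (ZMod p) ↥(pairSpan B H) ≥
      Module.finrank (ZMod p) (Fin n → ZMod p) - Module.finrank (ZMod p) ↥H

/-- The expected number, for a uniformly random alternating bilinear map
`B : F_p^n × F_p^n → F_p^{n-3}`, of bad subspaces for `B` of dimension at least `4`:
the total number of pairs `(B, H)` with `H` bad for `B` of dimension `≥ 4`, divided
by the total number of alternating bilinear maps. -/
noncomputable def expectedBadCount (p n : ℕ) : ℝ :=
  (Nat.card {x : AltMap p n × Submodule (ZMod p) (Fin n → ZMod p) //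
      IsBad x.1 x.2 ∧ 4 ≤ Module.finrank (ZMod p) ↥x.2} : ℝ) / Nat.card (AltMap p n)

open Module Finset

section Aux

/-- ordered pairs -/
abbrev Pairs (ι : Type*) [LT ι] : Type _ := {q : ι × ι // q.1 < q.2}

lemma finite_linearMap {R M N : Type*} [Semiring R] [AddCommMonoid M] [AddCommMonoid N]
    [Module R M] [Module R N] [Finite M] [Finite N] : Finite (M →ₗ[R] N) :=
  Finite.of_injective (fun f => (f : M → N)) DFunLike.coe_injective

lemma finite_submodule {R M : Type*} [Semiring R] [AddCommMonoid M] [Module R M] [Finite M] :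
    Finite (Submodule R M) :=
  Finite.of_injective (fun U => (U : Set M)) SetLike.coe_injective

variable {p n : ℕ}

lemma AltMap.finite (hp : p ≠ 0) : Finite (AltMap p n) := by
  haveI : NeZero p := ⟨hp⟩
  haveI : Finite ((Fin n → ZMod p) →ₗ[ZMod p] (Fin (n-3) → ZMod p)) := finite_linearMap
  haveI : Finite ((Fin n → ZMod p) →ₗ[ZMod p] (Fin n → ZMod p) →ₗ[ZMod p] (Fin (n-3) → ZMod p)) :=
    finite_linearMap
  exact Subtype.finite

lemma AltMap.skew (B : AltMap p n) (x y : Fin n → ZMod p) :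
    B.1 x y = - B.1 y x := by
  have h := B.2 (x + y)
  simp only [map_add, LinearMap.add_apply, B.2 x, B.2 y, zero_add, add_zero] at h
  rw [add_comm] at h
  exact eq_neg_of_add_eq_zero_left h

noncomputable def altEquiv {ι : Type*} [Fintype ι] [LinearOrder ι]
    (e : Basis ι (ZMod p) (Fin n → ZMod p)) :
    AltMap p n ≃ (Pairs ι → (Fin (n - 3) → ZMod p)) := by
  classical
  refine Equiv.ofBijective (fun B q => B.1 (e q.1.1) (e q.1.2)) ⟨?_, ?_⟩
  · intro B B' h
    have key : ∀ a b : ι, a < b → B.1 (e a) (e b) = B'.1 (e a) (e b) := fun a b hab =>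
      congrFun h ⟨(a, b), hab⟩
    apply Subtype.ext
    apply e.ext; intro i
    apply e.ext; intro j
    rcases lt_trichotomy i j with hij | rfl | hij
    · exact key i j hij
    · rw [B.2 (e i), B'.2 (e i)]
    · rw [AltMap.skew B, AltMap.skew B', key j i hij]
  · intro f
    refine ⟨⟨LinearMap.mk₂ (ZMod p)
      (fun x y => ∑ q : Pairs ι, (e.repr x q.1.1 * e.repr y q.1.2
          - e.repr x q.1.2 * e.repr y q.1.1) • f q) ?_ ?_ ?_ ?_, ?_⟩, ?_⟩
    · intro m₁ m₂ y
      rw [← Finset.sum_add_distrib]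
      refine Finset.sum_congr rfl fun q _ => ?_
      rw [map_add, Finsupp.add_apply, Finsupp.add_apply, ← add_smul]
      congr 1; ring
    · intro c m y
      rw [Finset.smul_sum]
      refine Finset.sum_congr rfl fun q _ => ?_
      rw [map_smul, Finsupp.smul_apply, Finsupp.smul_apply, smul_eq_mul, smul_eq_mul, smul_smul]
      congr 1; ring
    · intro m y₁ y₂
      rw [← Finset.sum_add_distrib]
      refine Finset.sum_congr rfl fun q _ => ?_
      rw [map_add, Finsupp.add_apply, Finsupp.add_apply, ← add_smul]
      congr 1; ring
    · intro c m y
      rw [Finset.smul_sum]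
      refine Finset.sum_congr rfl fun q _ => ?_
      rw [map_smul, Finsupp.smul_apply, Finsupp.smul_apply, smul_eq_mul, smul_eq_mul, smul_smul]
      congr 1; ring
    · intro v
      simp only [LinearMap.mk₂_apply]
      refine Finset.sum_eq_zero fun q _ => ?_
      rw [mul_comm, sub_self, zero_smul]
    · funext q
      obtain ⟨⟨i, j⟩, hij⟩ := q
      simp only [LinearMap.mk₂_apply]
      rw [Finset.sum_eq_single (⟨(i, j), hij⟩ : Pairs ι)]
      · rw [Basis.repr_self, Basis.repr_self, Finsupp.single_apply, Finsupp.single_apply,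
          Finsupp.single_apply, Finsupp.single_apply, if_pos rfl, if_pos rfl,
          if_neg hij.ne, if_neg hij.ne', one_mul, zero_mul, sub_zero, one_smul]
      · rintro ⟨⟨a, b⟩, hab⟩ - hne
        have hne' : ¬(i = a ∧ j = b) := by
          rintro ⟨rfl, rfl⟩; exact hne rfl
        have hne2 : ¬(i = b ∧ j = a) := by
          rintro ⟨rfl, rfl⟩; exact absurd hab (lt_asymm hij)
        rw [Basis.repr_self, Basis.repr_self, Finsupp.single_apply, Finsupp.single_apply,
          Finsupp.single_apply, Finsupp.single_apply, ite_zero_mul_ite_zero,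
          ite_zero_mul_ite_zero, if_neg hne', if_neg hne2, sub_zero, zero_smul]
      · intro h
        exact absurd (Finset.mem_univ _) h

lemma altEquiv_apply {ι : Type*} [Fintype ι] [LinearOrder ι]
    (e : Basis ι (ZMod p) (Fin n → ZMod p)) (B : AltMap p n) (q : Pairs ι) :
    altEquiv e B q = B.1 (e q.1.1) (e q.1.2) := rfl

lemma card_constrained {ι : Type*} [Fintype ι] [LinearOrder ι]
    (e : Basis ι (ZMod p) (Fin n → ZMod p))
    (C : Pairs ι → Submodule (ZMod p) (Fin (n - 3) → ZMod p)) :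
    Nat.card {B : AltMap p n // ∀ q : Pairs ι, B.1 (e q.1.1) (e q.1.2) ∈ C q}
      = ∏ q : Pairs ι, Nat.card (C q) := by
  have e1 : {B : AltMap p n // ∀ q : Pairs ι, B.1 (e q.1.1) (e q.1.2) ∈ C q}
      ≃ {f : Pairs ι → (Fin (n - 3) → ZMod p) // ∀ q, f q ∈ C q} :=
    (altEquiv e).subtypeEquiv (fun B => Iff.rfl)
  rw [Nat.card_congr (e1.trans (Equiv.subtypePiEquivPi)), Nat.card_pi]

lemma card_altMap (hp : p ≠ 0) :
    Nat.card (AltMap p n) = (p ^ (n - 3)) ^ (Fintype.card (Pairs (Fin n))) := by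
  haveI : NeZero p := ⟨hp⟩
  have e0 : AltMap p n ≃ {B : AltMap p n // ∀ q : Pairs (Fin n),
      B.1 (Pi.basisFun (ZMod p) (Fin n) q.1.1) (Pi.basisFun (ZMod p) (Fin n) q.1.2)
        ∈ (⊤ : Submodule (ZMod p) (Fin (n - 3) → ZMod p))} :=
    (Equiv.subtypeUnivEquiv (fun B q => Submodule.mem_top)).symm
  rw [Nat.card_congr e0, card_constrained, Finset.prod_const]
  have : Nat.card (⊤ : Submodule (ZMod p) (Fin (n - 3) → ZMod p)) = p ^ (n - 3) := by
    rw [Nat.card_congr (Submodule.topEquiv (R := ZMod p)).toEquiv, Nat.card_fun]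
    simp [Nat.card_zmod, Nat.card_eq_fintype_card]
  rw [this, Finset.card_univ]

lemma pairs_card_eq (ι : Type*) [Fintype ι] [LinearOrder ι] :
    Fintype.card (Pairs ι) = Fintype.card (Pairs (Fin (Fintype.card ι))) := by
  have e := Fintype.orderIsoFinOfCardEq ι rfl
  refine Fintype.card_congr (Equiv.subtypeEquiv
    (Equiv.prodCongr e.symm.toEquiv e.symm.toEquiv) ?_)
  rintro ⟨a, b⟩
  simp

lemma pairs_card_fin (m : ℕ) : Fintype.card (Pairs (Fin m)) = ∑ i ∈ Finset.range m, i := by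
  have eqv : Pairs (Fin m) ≃ Σ j : Fin m, Fin j.1 :=
    { toFun := fun q => ⟨q.1.2, ⟨q.1.1, q.2⟩⟩
      invFun := fun x => ⟨(⟨x.2.1, x.2.2.trans x.1.2⟩, x.1), x.2.2⟩
      left_inv := by rintro ⟨⟨a, b⟩, h⟩; rfl
      right_inv := by rintro ⟨j, i⟩; rfl }
  rw [Fintype.card_congr eqv, Fintype.card_sigma]
  simp only [Fintype.card_fin]
  exact Fin.sum_univ_eq_sum_range (fun i => i) m

section Prime

variable (hp : p.Prime)
include hp

lemma card_submodule {m : ℕ} (U : Submodule (ZMod p) (Fin m → ZMod p)) :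
    Nat.card U = p ^ finrank (ZMod p) U := by
  haveI : Fact p.Prime := ⟨hp⟩
  haveI : Fintype U := Fintype.ofFinite U
  rw [Nat.card_eq_fintype_card, card_eq_pow_finrank (K := ZMod p), ZMod.card]

lemma exists_superspace {m : ℕ} (N : Submodule (ZMod p) (Fin m → ZMod p)) (k : ℕ)
    (h1 : finrank (ZMod p) N ≤ k) (h2 : k ≤ m) :
    ∃ U, N ≤ U ∧ finrank (ZMod p) U = k := by
  haveI : Fact p.Prime := ⟨hp⟩
  induction k, h1 using Nat.le_induction with
  | base => exact ⟨N, le_rfl, rfl⟩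
  | succ k hk ih =>
    obtain ⟨U, hNU, hU⟩ := ih (Nat.le_of_succ_le h2)
    have hUne : U ≠ ⊤ := by
      intro hTop
      rw [hTop, finrank_top, finrank_fintype_fun_eq_card, Fintype.card_fin] at hU
      omega
    obtain ⟨x, -, hx⟩ := SetLike.exists_of_lt (hUne.lt_top)
    have hx0 : x ≠ 0 := fun h => hx (h ▸ U.zero_mem)
    refine ⟨U ⊔ Submodule.span (ZMod p) {x}, hNU.trans le_sup_left, ?_⟩
    have hdisj : Disjoint U (Submodule.span (ZMod p) {x}) :=
      (Submodule.disjoint_span_singleton' hx0).2 hx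
    have h := Submodule.finrank_sup_add_finrank_inf_eq U (Submodule.span (ZMod p) {x})
    rw [hdisj.eq_bot, finrank_bot, add_zero, finrank_span_singleton hx0, hU] at h
    omega

omit hp

lemma prod_one_sub_ge (k : ℕ) :
    (1/4 : ℝ) + (1/2) * (1/2)^k ≤ ∏ j ∈ Finset.range k, (1 - (1/2 : ℝ)^(j+1)) := by
  induction k with
  | zero => norm_num
  | succ k ih =>
    rw [Finset.prod_range_succ]
    rcases Nat.eq_zero_or_pos k with rfl | hk
    · norm_num
    · have ht : (1/2 : ℝ)^(k+1) ≤ 1/4 := by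
        calc (1/2 : ℝ)^(k+1) ≤ (1/2 : ℝ)^2 := by
              apply pow_le_pow_of_le_one (by norm_num) (by norm_num); omega
          _ = 1/4 := by norm_num
      have ht0 : (0 : ℝ) < (1/2 : ℝ)^(k+1) := by positivity
      have h2 : (1/2 : ℝ)^(k+1) = (1/2) * (1/2)^k := by ring
      nlinarith [mul_le_mul_of_nonneg_right ih (by linarith : (0:ℝ) ≤ 1 - (1/2 : ℝ)^(k+1))]

lemma prod_pow_sub_ge (hp2 : 2 ≤ p) (k : ℕ) :
    (1/4 : ℝ) * (p : ℝ)^(k*k) ≤ ∏ i ∈ Finset.range k, ((p : ℝ)^k - (p : ℝ)^i) := by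
  have hp2' : (2 : ℝ) ≤ p := by exact_mod_cast hp2
  have hp0 : (0 : ℝ) < p := by linarith
  have hstep : ∀ i ∈ Finset.range k, ((p : ℝ)^k - (p : ℝ)^i)
      = (p : ℝ)^k * (1 - ((p:ℝ)⁻¹)^(k - i)) := by
    intro i hi
    have hik : i < k := Finset.mem_range.1 hi
    have hpk : (p:ℝ)^k * ((p:ℝ)⁻¹)^(k - i) = (p:ℝ)^i := by
      rw [inv_pow, mul_inv_eq_iff_eq_mul₀ (by positivity), ← pow_add]
      congr 1
      omega
    rw [mul_sub, mul_one, hpk]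
  rw [Finset.prod_congr rfl hstep, Finset.prod_mul_distrib, Finset.prod_const,
    Finset.card_range, ← pow_mul]
  have hre : ∏ i ∈ Finset.range k, (1 - ((p:ℝ)⁻¹)^(k - i))
      = ∏ j ∈ Finset.range k, (1 - ((p:ℝ)⁻¹)^(j + 1)) := by
    rw [← Finset.prod_range_reflect]
    refine Finset.prod_congr rfl fun j hj => ?_
    have hjk := Finset.mem_range.1 hj
    have hexp : k - (k - 1 - j) = j + 1 := by omega
    rw [hexp]
  rw [hre]
  have hinv : ((p:ℝ)⁻¹) ≤ 1/2 := by
    rw [one_div]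
    exact inv_anti₀ (by norm_num) hp2'
  have hcomp : ∏ j ∈ Finset.range k, (1 - (1/2 : ℝ)^(j+1))
      ≤ ∏ j ∈ Finset.range k, (1 - ((p:ℝ)⁻¹)^(j + 1)) := by
    refine Finset.prod_le_prod (fun j _ => ?_) (fun j _ => ?_)
    · have h12 : (1/2 : ℝ)^(j+1) ≤ (1/2 : ℝ)^1 := by
        apply pow_le_pow_of_le_one (by norm_num) (by norm_num)
        omega
      norm_num at h12 ⊢
      linarith
    · have h1 : ((p:ℝ)⁻¹)^(j+1) ≤ (1/2 : ℝ)^(j+1) :=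
        pow_le_pow_left₀ (by positivity) hinv _
      linarith
  have hq := prod_one_sub_ge k
  have hge : (1/4 : ℝ) ≤ ∏ j ∈ Finset.range k, (1 - ((p:ℝ)⁻¹)^(j + 1)) := by
    have hpos : (0:ℝ) ≤ (1/2) * (1/2 : ℝ)^k := by positivity
    linarith
  calc (1/4 : ℝ) * (p : ℝ)^(k*k)
      ≤ (∏ j ∈ Finset.range k, (1 - ((p:ℝ)⁻¹)^(j + 1))) * (p:ℝ)^(k*k) :=
        mul_le_mul_of_nonneg_right hge (by positivity)
    _ = (p:ℝ)^(k*k) * ∏ j ∈ Finset.range k, (1 - ((p:ℝ)⁻¹)^(j + 1)) := by ring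

include hp in
lemma card_grass_le {m k : ℕ} (hk : k ≤ m) :
    (Nat.card {U : Submodule (ZMod p) (Fin m → ZMod p) // finrank (ZMod p) U = k} : ℝ)
      ≤ 4 * (p : ℝ) ^ (k * (m - k)) := by
  haveI : Fact p.Prime := ⟨hp⟩
  haveI : Finite (Submodule (ZMod p) (Fin m → ZMod p)) := finite_submodule
  haveI : Finite ((Fin k → ZMod p) →ₗ[ZMod p] (Fin m → ZMod p)) := finite_linearMap
  set Gr := {U : Submodule (ZMod p) (Fin m → ZMod p) // finrank (ZMod p) U = k} with hGrdef
  have hiso : ∀ U : Gr, Nonempty ((Fin k → ZMod p) ≃ₗ[ZMod p] U.1) := fun U =>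
    FiniteDimensional.nonempty_linearEquiv_of_finrank_eq (by
      rw [finrank_fintype_fun_eq_card, Fintype.card_fin, U.2])
  let iso : ∀ U : Gr, (Fin k → ZMod p) ≃ₗ[ZMod p] U.1 := fun U => (hiso U).some
  let F : Gr × ((Fin k → ZMod p) ≃ₗ[ZMod p] (Fin k → ZMod p)) →
      ((Fin k → ZMod p) →ₗ[ZMod p] (Fin m → ZMod p)) := fun x =>
    x.1.1.subtype.comp (((iso x.1).toLinearMap).comp x.2.toLinearMap)
  have hrange : ∀ x, LinearMap.range (F x) = x.1.1 := by
    intro x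
    have hsurj : Function.Surjective (((iso x.1).toLinearMap).comp x.2.toLinearMap) :=
      (iso x.1).surjective.comp x.2.surjective
    rw [show LinearMap.range (F x)
        = LinearMap.range (x.1.1.subtype.comp (((iso x.1).toLinearMap).comp x.2.toLinearMap))
        from rfl,
      LinearMap.range_comp_of_range_eq_top _ (LinearMap.range_eq_top.2 hsurj),
      Submodule.range_subtype]
  have hF : Function.Injective F := by
    rintro ⟨⟨U, hU⟩, g⟩ ⟨⟨U', hU'⟩, g'⟩ h
    have hUU : U = U' := by
      have h1 := hrange (⟨⟨U, hU⟩, g⟩ : Gr × _)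
      have h2 := hrange (⟨⟨U', hU'⟩, g'⟩ : Gr × _)
      rw [h] at h1
      rw [h1] at h2
      exact h2
    subst hUU
    have hg : g = g' := by
      refine LinearEquiv.ext fun v => ?_
      have hv : (F (⟨⟨U, hU⟩, g⟩ : Gr × _)) v = (F (⟨⟨U, hU'⟩, g'⟩ : Gr × _)) v := by rw [h]
      have heq : ((iso ⟨U, hU⟩) (g v) : Fin m → ZMod p) = ((iso ⟨U, hU⟩) (g' v) : Fin m → ZMod p) :=
        hv
      exact (iso ⟨U, hU⟩).injective (Subtype.ext heq)
    rw [hg]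
  have hcard := Nat.card_le_card_of_injective F hF
  rw [Nat.card_prod] at hcard
  have hG : Nat.card ((Fin k → ZMod p) ≃ₗ[ZMod p] (Fin k → ZMod p))
      = ∏ i : Fin k, (p ^ k - p ^ (i : ℕ)) := by
    have e2 : GL (Fin k) (ZMod p) ≃ ((Fin k → ZMod p) ≃ₗ[ZMod p] (Fin k → ZMod p)) :=
      ((Matrix.GeneralLinearGroup.toLin).trans
        (LinearMap.GeneralLinearGroup.generalLinearEquiv (ZMod p) (Fin k → ZMod p))).toEquiv
    rw [← Nat.card_congr e2, Matrix.card_GL_field, ZMod.card]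
  have hL : Nat.card ((Fin k → ZMod p) →ₗ[ZMod p] (Fin m → ZMod p)) = p ^ (k * m) := by
    rw [Nat.card_congr (LinearMap.toMatrix (Pi.basisFun (ZMod p) (Fin k))
        (Pi.basisFun (ZMod p) (Fin m))).toEquiv,
      Nat.card_congr ((Matrix.of (m := Fin m) (n := Fin k) (α := ZMod p)).symm)]
    rw [Nat.card_fun, Nat.card_fun, Nat.card_zmod, Nat.card_eq_fintype_card,
      Nat.card_eq_fintype_card, Fintype.card_fin, Fintype.card_fin, ← pow_mul]
  rw [hG, hL] at hcard
  have hcast : (Nat.card Gr : ℝ) * ∏ i : Fin k, ((p : ℝ)^k - (p : ℝ)^(i : ℕ))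
      ≤ (p : ℝ)^(k * m) := by
    calc (Nat.card Gr : ℝ) * ∏ i : Fin k, ((p : ℝ)^k - (p : ℝ)^(i : ℕ))
        = ((Nat.card Gr * ∏ i : Fin k, (p^k - p^(i : ℕ)) : ℕ) : ℝ) := by
          rw [Nat.cast_mul, Nat.cast_prod]
          congr 1
          refine Finset.prod_congr rfl fun i _ => ?_
          rw [Nat.cast_sub (Nat.pow_le_pow_right hp.one_lt.le i.2.le)]
          push_cast
          ring
      _ ≤ ((p^(k*m) : ℕ) : ℝ) := Nat.cast_le.2 hcard
      _ = (p : ℝ)^(k*m) := by push_cast; ring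
  have hprod : (1/4 : ℝ) * (p : ℝ)^(k*k) ≤ ∏ i : Fin k, ((p : ℝ)^k - (p : ℝ)^(i : ℕ)) := by
    rw [Fin.prod_univ_eq_prod_range (fun i => ((p : ℝ)^k - (p : ℝ)^i)) k]
    exact prod_pow_sub_ge hp.two_le k
  have h2 : (Nat.card Gr : ℝ) * ((1/4) * (p : ℝ)^(k*k)) ≤ (p : ℝ)^(k*m) :=
    le_trans (mul_le_mul_of_nonneg_left hprod (Nat.cast_nonneg _)) hcast
  have hppos : (0 : ℝ) < (p : ℝ) := by exact_mod_cast hp.pos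
  have hpk : (0 : ℝ) < (p : ℝ)^(k*k) := by positivity
  have hsplit : (p : ℝ)^(k*m) = (p : ℝ)^(k*(m-k)) * (p : ℝ)^(k*k) := by
    rw [← pow_add, ← Nat.mul_add, Nat.sub_add_cancel hk]
  rw [hsplit] at h2
  have h3 : (Nat.card Gr : ℝ) * (1/4) ≤ (p : ℝ)^(k*(m-k)) := by
    apply le_of_mul_le_mul_right _ hpk
    calc (Nat.card Gr : ℝ) * (1/4) * (p : ℝ)^(k*k)
        = (Nat.card Gr : ℝ) * ((1/4) * (p : ℝ)^(k*k)) := by ring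
      _ ≤ (p : ℝ)^(k*(m-k)) * (p : ℝ)^(k*k) := h2
  linarith

include hp in
lemma exists_adapted (H : Submodule (ZMod p) (Fin n → ZMod p)) {d : ℕ}
    (hd : finrank (ZMod p) H = d) (hdn : d ≤ n) :
    ∃ e : Basis (Lex (Fin d ⊕ Fin (n - d))) (ZMod p) (Fin n → ZMod p),
      ∀ x : Lex (Fin d ⊕ Fin (n - d)), (ofLex x).isLeft = true → e x ∈ H := by
  haveI : Fact p.Prime := ⟨hp⟩
  obtain ⟨K, hK⟩ := Submodule.exists_isCompl H
  have hfr : finrank (ZMod p) K = n - d := by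
    have hadd := Submodule.finrank_add_eq_of_isCompl hK
    rw [hd, finrank_fintype_fun_eq_card, Fintype.card_fin] at hadd
    omega
  let bH : Basis (Fin d) (ZMod p) H :=
    (Module.finBasis (ZMod p) H).reindex (finCongr (by rw [hd]))
  let bK : Basis (Fin (n - d)) (ZMod p) K :=
    (Module.finBasis (ZMod p) K).reindex (finCongr (by rw [hfr]))
  let e0 : Basis (Fin d ⊕ Fin (n - d)) (ZMod p) (Fin n → ZMod p) :=
    (bH.prod bK).map (Submodule.prodEquivOfIsCompl H K hK)
  refine ⟨e0.reindex (toLex : (Fin d ⊕ Fin (n - d)) ≃ Lex (Fin d ⊕ Fin (n - d))), fun x hx => ?_⟩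
  obtain ⟨i, hi⟩ := Sum.isLeft_iff.1 hx
  have hx' : x = toLex (Sum.inl i) := hi
  subst hx'
  rw [Module.Basis.reindex_apply, Equiv.symm_apply_apply, Basis.map_apply, Basis.prod_apply]
  simp only [Sum.elim_inl, Function.comp_apply, LinearMap.coe_inl]
  rw [Submodule.coe_prodEquivOfIsCompl']
  exact H.add_mem (bH i).2 (by simp)

include hp in
lemma card_pairSpan_le (H : Submodule (ZMod p) (Fin n → ZMod p)) {d : ℕ}
    (hd : finrank (ZMod p) H = d) (hdn : d ≤ n)
    (U : Submodule (ZMod p) (Fin (n - 3) → ZMod p)) (hU : finrank (ZMod p) U = d - 3) :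
    Nat.card {B : AltMap p n // pairSpan B H ≤ U}
      ≤ p ^ ((d - 3) * ∑ i ∈ Finset.range d, i)
        * (p ^ (n - 3)) ^ ((∑ i ∈ Finset.range n, i) - ∑ i ∈ Finset.range d, i) := by
  haveI : Fact p.Prime := ⟨hp⟩
  haveI : Finite (AltMap p n) := AltMap.finite hp.pos.ne'
  classical
  obtain ⟨e, he⟩ := exists_adapted hp H hd hdn
  let P : Pairs (Lex (Fin d ⊕ Fin (n - d))) → Prop :=
    fun q => (ofLex q.1.1).isLeft = true ∧ (ofLex q.1.2).isLeft = true
  let C : Pairs (Lex (Fin d ⊕ Fin (n - d))) → Submodule (ZMod p) (Fin (n - 3) → ZMod p) :=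
    fun q => if P q then U else ⊤
  have hinj : Nat.card {B : AltMap p n // pairSpan B H ≤ U}
      ≤ Nat.card {B : AltMap p n //
          ∀ q : Pairs (Lex (Fin d ⊕ Fin (n - d))), B.1 (e q.1.1) (e q.1.2) ∈ C q} := by
    refine Nat.card_le_card_of_injective (fun B => ⟨B.1, fun q => ?_⟩) ?_
    · by_cases hq : P q
      · have h1 : e q.1.1 ∈ H := he q.1.1 hq.1
        have h2 : e q.1.2 ∈ H := he q.1.2 hq.2
        have hmem : (B.1).1 (e q.1.1) (e q.1.2) ∈ pairSpan B.1 H :=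
          Submodule.subset_span ⟨e q.1.1, h1, e q.1.2, h2, rfl⟩
        simp only [C, if_pos hq]
        exact B.2 hmem
      · simp only [C, if_neg hq]
        exact Submodule.mem_top
    · intro B B' h
      apply Subtype.ext
      have h2 := congrArg Subtype.val h
      exact h2
  refine hinj.trans ?_
  rw [card_constrained e C]
  have ePd : Pairs (Fin d) ≃ {q : Pairs (Lex (Fin d ⊕ Fin (n - d))) // P q} := by
    refine Equiv.ofBijective (fun s => ⟨⟨(toLex (Sum.inl s.1.1), toLex (Sum.inl s.1.2)),
      Sum.Lex.inl_lt_inl_iff.2 s.2⟩, ⟨by simp, by simp⟩⟩) ⟨?_, ?_⟩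
    · intro s t h
      have h1 : toLex (Sum.inl s.1.1) = toLex (Sum.inl t.1.1) :=
        congrArg (fun x => x.1.1.1) h
      have h2 : toLex (Sum.inl s.1.2) = toLex (Sum.inl t.1.2) :=
        congrArg (fun x => x.1.1.2) h
      exact Subtype.ext (Prod.ext (Sum.inl.inj (toLex.injective h1))
        (Sum.inl.inj (toLex.injective h2)))
    · rintro ⟨⟨⟨x, y⟩, hxy⟩, hPx, hPy⟩
      obtain ⟨i, hi⟩ := Sum.isLeft_iff.1 hPx
      obtain ⟨j, hj⟩ := Sum.isLeft_iff.1 hPy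
      have hx' : x = toLex (Sum.inl i) := hi
      have hy' : y = toLex (Sum.inl j) := hj
      subst hx' hy'
      rw [Sum.Lex.inl_lt_inl_iff] at hxy
      exact ⟨⟨(i, j), hxy⟩, rfl⟩
  have hcardP : (Finset.univ.filter P).card = ∑ i ∈ Finset.range d, i := by
    rw [← Fintype.card_subtype, ← Fintype.card_congr ePd, pairs_card_fin]
  have hcard_ι : Fintype.card (Lex (Fin d ⊕ Fin (n - d))) = n := by
    rw [Fintype.card_congr (ofLex : Lex (Fin d ⊕ Fin (n - d)) ≃ (Fin d ⊕ Fin (n - d))),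
      Fintype.card_sum, Fintype.card_fin, Fintype.card_fin]
    omega
  have hcardtot : Fintype.card (Pairs (Lex (Fin d ⊕ Fin (n - d)))) = ∑ i ∈ Finset.range n, i := by
    rw [pairs_card_eq, hcard_ι, pairs_card_fin]
  have hcardNP : (Finset.univ.filter (fun q => ¬ P q)).card
      = (∑ i ∈ Finset.range n, i) - ∑ i ∈ Finset.range d, i := by
    have hsum := Finset.card_filter_add_card_filter_not
      (s := (Finset.univ : Finset (Pairs (Lex (Fin d ⊕ Fin (n - d)))))) (p := P)
    rw [Finset.card_univ, hcardtot, hcardP] at hsum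
    omega
  have hcardU : Nat.card U = p ^ (d - 3) := by rw [card_submodule hp U, hU]
  have hcardT : Nat.card (⊤ : Submodule (ZMod p) (Fin (n - 3) → ZMod p)) = p ^ (n - 3) := by
    rw [card_submodule hp, finrank_top, finrank_fintype_fun_eq_card, Fintype.card_fin]
  calc ∏ q : Pairs (Lex (Fin d ⊕ Fin (n - d))), Nat.card (C q)
      = ∏ q : Pairs (Lex (Fin d ⊕ Fin (n - d))), (if P q then Nat.card U
          else Nat.card (⊤ : Submodule (ZMod p) (Fin (n - 3) → ZMod p))) := by
        refine Finset.prod_congr rfl fun q _ => ?_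
        simp only [C]
        by_cases hq : P q
        · rw [if_pos hq, if_pos hq]
        · rw [if_neg hq, if_neg hq]
    _ = (Nat.card U) ^ (Finset.univ.filter P).card
        * (Nat.card (⊤ : Submodule (ZMod p) (Fin (n - 3) → ZMod p)))
          ^ (Finset.univ.filter (fun q => ¬ P q)).card := by
        rw [Finset.prod_ite, Finset.prod_const, Finset.prod_const]
    _ ≤ _ := by
        rw [hcardP, hcardNP, hcardU, hcardT, ← pow_mul]

include hp in
lemma card_bad_le (hn : 5 ≤ n) (H : Submodule (ZMod p) (Fin n → ZMod p)) {d : ℕ}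
    (hd : finrank (ZMod p) H = d) (h4 : 4 ≤ d) (hdn : d < n) :
    (Nat.card {B : AltMap p n // IsBad B H} : ℝ)
      ≤ 4 * (p : ℝ) ^ ((d - 3) * (n - d))
        * ((p : ℝ) ^ ((d - 3) * ∑ i ∈ Finset.range d, i)
          * ((p : ℝ) ^ (n - 3)) ^ ((∑ i ∈ Finset.range n, i) - ∑ i ∈ Finset.range d, i)) := by
  haveI : Fact p.Prime := ⟨hp⟩
  haveI : Finite (AltMap p n) := AltMap.finite hp.pos.ne'
  haveI : Finite (Submodule (ZMod p) (Fin (n - 3) → ZMod p)) := finite_submodule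
  classical
  set T : ℕ := p ^ ((d - 3) * ∑ i ∈ Finset.range d, i)
      * (p ^ (n - 3)) ^ ((∑ i ∈ Finset.range n, i) - ∑ i ∈ Finset.range d, i) with hT
  have hchoice : ∀ B : {B : AltMap p n // IsBad B H},
      ∃ U : Submodule (ZMod p) (Fin (n - 3) → ZMod p),
        pairSpan B.1 H ≤ U ∧ finrank (ZMod p) U = d - 3 := by
    intro B
    have hr : finrank (ZMod p) (pairSpan B.1 H) ≤ d - 3 := by
      have h1 := B.2.2
      rw [finrank_fintype_fun_eq_card, Fintype.card_fin, finrank_fintype_fun_eq_card,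
        Fintype.card_fin, hd] at h1
      have h2 : finrank (ZMod p) (pairSpan B.1 H) ≤ n - 3 := by
        have h3 := Submodule.finrank_le (pairSpan B.1 H)
        rwa [finrank_fintype_fun_eq_card, Fintype.card_fin] at h3
      omega
    exact exists_superspace hp (pairSpan B.1 H) (d - 3) hr (by omega)
  choose Uf hUf1 hUf2 using hchoice
  have h1 : Nat.card {B : AltMap p n // IsBad B H}
      ≤ Nat.card ((U : {U : Submodule (ZMod p) (Fin (n - 3) → ZMod p) //
          finrank (ZMod p) U = d - 3}) × {B : AltMap p n // pairSpan B H ≤ U.1}) := by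
    refine Nat.card_le_card_of_injective
      (fun B => ⟨⟨Uf B, hUf2 B⟩, ⟨B.1, hUf1 B⟩⟩) ?_
    intro B B' h
    exact Subtype.ext (congrArg (fun x => x.2.1) h)
  letI : Fintype {U : Submodule (ZMod p) (Fin (n - 3) → ZMod p) //
      finrank (ZMod p) U = d - 3} := Fintype.ofFinite _
  letI : ∀ U : {U : Submodule (ZMod p) (Fin (n - 3) → ZMod p) // finrank (ZMod p) U = d - 3},
      Fintype {B : AltMap p n // pairSpan B H ≤ U.1} := fun U => Fintype.ofFinite _
  have h2 : Nat.card ((U : {U : Submodule (ZMod p) (Fin (n - 3) → ZMod p) //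
        finrank (ZMod p) U = d - 3}) × {B : AltMap p n // pairSpan B H ≤ U.1})
      ≤ (Fintype.card {U : Submodule (ZMod p) (Fin (n - 3) → ZMod p) //
          finrank (ZMod p) U = d - 3}) * T := by
    rw [Nat.card_eq_fintype_card, Fintype.card_sigma]
    calc ∑ U : {U : Submodule (ZMod p) (Fin (n - 3) → ZMod p) // finrank (ZMod p) U = d - 3},
          Fintype.card {B : AltMap p n // pairSpan B H ≤ U.1}
        ≤ ∑ _U : {U : Submodule (ZMod p) (Fin (n - 3) → ZMod p) //
            finrank (ZMod p) U = d - 3}, T := by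
          refine Finset.sum_le_sum fun U _ => ?_
          rw [← Nat.card_eq_fintype_card, hT]
          exact card_pairSpan_le hp H hd hdn.le U.1 U.2
      _ = _ := by rw [Finset.sum_const, Finset.card_univ, smul_eq_mul]
  have h4' : (Nat.card {B : AltMap p n // IsBad B H} : ℝ)
      ≤ (Fintype.card {U : Submodule (ZMod p) (Fin (n - 3) → ZMod p) //
          finrank (ZMod p) U = d - 3} : ℝ) * (T : ℝ) := by
    exact_mod_cast le_trans h1 h2
  have h5 : (Fintype.card {U : Submodule (ZMod p) (Fin (n - 3) → ZMod p) //
      finrank (ZMod p) U = d - 3} : ℝ) ≤ 4 * (p : ℝ) ^ ((d - 3) * (n - 3 - (d - 3))) := by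
    rw [← Nat.card_eq_fintype_card]
    exact card_grass_le hp (by omega)
  have hnd : n - 3 - (d - 3) = n - d := by omega
  rw [hnd] at h5
  calc (Nat.card {B : AltMap p n // IsBad B H} : ℝ)
      ≤ (Fintype.card {U : Submodule (ZMod p) (Fin (n - 3) → ZMod p) //
          finrank (ZMod p) U = d - 3} : ℝ) * (T : ℝ) := h4'
    _ ≤ (4 * (p : ℝ) ^ ((d - 3) * (n - d))) * (T : ℝ) :=
        mul_le_mul_of_nonneg_right h5 (Nat.cast_nonneg _)
    _ = _ := by rw [hT]; push_cast; ring

omit hp in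
lemma exponent_le (hp2 : 2 ≤ p) {d : ℕ} (hn : 5 ≤ n) (h4 : 4 ≤ d) (hdn : d < n) :
    (p : ℝ) ^ (d * (n - d)) * ((p : ℝ) ^ ((d - 3) * (n - d))
        * ((p : ℝ) ^ ((d - 3) * ∑ i ∈ Finset.range d, i)
          * ((p : ℝ) ^ (n - 3)) ^ ((∑ i ∈ Finset.range n, i) - ∑ i ∈ Finset.range d, i)))
      ≤ (p : ℝ) ^ ((4 : ℤ) - (n : ℤ)) * ((p : ℝ) ^ (n - 3)) ^ (∑ i ∈ Finset.range n, i) := by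
  have hp0 : (0 : ℝ) < p := by exact_mod_cast Nat.lt_of_lt_of_le Nat.zero_lt_two hp2
  have hp1 : (1 : ℝ) ≤ p := by exact_mod_cast hp2.trans' one_le_two
  set sd := ∑ i ∈ Finset.range d, i with hsd
  set sn := ∑ i ∈ Finset.range n, i with hsn
  have hPdPn : sd ≤ sn := Finset.sum_le_sum_of_subset (Finset.range_subset_range.2 hdn.le)
  have h2Pd : ((sd : ℤ)) * 2 = (d : ℤ) * ((d : ℤ) - 1) := by
    have hgauss : sd * 2 = d * (d - 1) := Finset.sum_range_id_mul_two d
    have hcast : ((sd * 2 : ℕ) : ℤ) = ((d * (d - 1) : ℕ) : ℤ) := by exact_mod_cast hgauss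
    push_cast [Nat.cast_sub (by omega : 1 ≤ d)] at hcast
    linarith
  have hEF : ((d * (n - d) + ((d - 3) * (n - d) + ((d - 3) * sd + (n - 3) * (sn - sd))) : ℕ) : ℤ)
      ≤ ((4 : ℤ) - (n : ℤ)) + (((n - 3) * sn : ℕ) : ℤ) := by
    push_cast [Nat.cast_sub hPdPn, Nat.cast_sub (by omega : 3 ≤ d),
      Nat.cast_sub (by omega : 3 ≤ n), Nat.cast_sub (by omega : d ≤ n)]
    have hD4 : (4 : ℤ) ≤ (d : ℤ) := by exact_mod_cast h4
    have hDN : (d : ℤ) + 1 ≤ (n : ℤ) := by exact_mod_cast hdn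
    have hC : ((n : ℤ) - d) * ((sd : ℤ) * 2) = ((n : ℤ) - d) * ((d : ℤ) * ((d : ℤ) - 1)) := by
      rw [h2Pd]
    have hA : (0 : ℤ) ≤ ((n : ℤ) - d - 1) * (((d : ℤ) - 1) * ((d : ℤ) - 4)) :=
      mul_nonneg (by omega) (mul_nonneg (by omega) (by omega))
    have hB : (0 : ℤ) ≤ ((d : ℤ) - 3) * ((d : ℤ) - 4) := mul_nonneg (by omega) (by omega)
    nlinarith [hC, hA, hB]
  have h := zpow_le_zpow_right₀ hp1 hEF
  rw [zpow_add₀ (ne_of_gt hp0)] at h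
  simp only [zpow_natCast] at h
  calc (p : ℝ) ^ (d * (n - d)) * ((p : ℝ) ^ ((d - 3) * (n - d))
        * ((p : ℝ) ^ ((d - 3) * sd) * ((p : ℝ) ^ (n - 3)) ^ (sn - sd)))
      = (p : ℝ) ^ (d * (n - d) + ((d - 3) * (n - d) + ((d - 3) * sd + (n - 3) * (sn - sd)))) := by
        rw [← pow_mul, ← pow_add, ← pow_add, ← pow_add]
    _ ≤ (p : ℝ) ^ ((4 : ℤ) - (n : ℤ)) * (p : ℝ) ^ ((n - 3) * sn) := h
    _ = (p : ℝ) ^ ((4 : ℤ) - (n : ℤ)) * ((p : ℝ) ^ (n - 3)) ^ sn := by rw [pow_mul]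

include hp in
lemma main_bound (hn : 5 ≤ n) :
    (Nat.card {x : AltMap p n × Submodule (ZMod p) (Fin n → ZMod p) //
        IsBad x.1 x.2 ∧ 4 ≤ finrank (ZMod p) x.2} : ℝ)
      ≤ 16 * ((n : ℝ) - 4) * (p : ℝ) ^ ((4 : ℤ) - (n : ℤ)) * Nat.card (AltMap p n) := by
  haveI : Fact p.Prime := ⟨hp⟩
  haveI : Finite (AltMap p n) := AltMap.finite hp.pos.ne'
  haveI : Finite (Submodule (ZMod p) (Fin n → ZMod p)) := finite_submodule
  classical
  have eqv : {x : AltMap p n × Submodule (ZMod p) (Fin n → ZMod p) //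
        IsBad x.1 x.2 ∧ 4 ≤ finrank (ZMod p) x.2}
      ≃ (H : Submodule (ZMod p) (Fin n → ZMod p)) ×
          {B : AltMap p n // IsBad B H ∧ 4 ≤ finrank (ZMod p) H} :=
    { toFun := fun x => ⟨x.1.2, x.1.1, x.2⟩
      invFun := fun s => ⟨(s.2.1, s.1), s.2.2⟩
      left_inv := fun x => rfl
      right_inv := fun s => rfl }
  rw [Nat.card_congr eqv]
  letI : Fintype (Submodule (ZMod p) (Fin n → ZMod p)) := Fintype.ofFinite _
  letI : ∀ H : Submodule (ZMod p) (Fin n → ZMod p),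
      Fintype {B : AltMap p n // IsBad B H ∧ 4 ≤ finrank (ZMod p) H} :=
    fun H => Fintype.ofFinite _
  rw [Nat.card_eq_fintype_card, Fintype.card_sigma]
  set g : ℕ → ℝ := fun d => if 4 ≤ d ∧ d < n then
      4 * (p : ℝ) ^ ((d - 3) * (n - d))
        * ((p : ℝ) ^ ((d - 3) * ∑ i ∈ Finset.range d, i)
          * ((p : ℝ) ^ (n - 3)) ^ ((∑ i ∈ Finset.range n, i) - ∑ i ∈ Finset.range d, i))
    else 0 with hg
  set K : ℝ := 16 * (p : ℝ) ^ ((4 : ℤ) - (n : ℤ)) * (Nat.card (AltMap p n) : ℝ) with hK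
  have hfrk : ∀ H : Submodule (ZMod p) (Fin n → ZMod p), finrank (ZMod p) H ≤ n := by
    intro H
    have h := Submodule.finrank_le H
    rwa [finrank_fintype_fun_eq_card, Fintype.card_fin] at h
  have hHbound : ∀ H : Submodule (ZMod p) (Fin n → ZMod p),
      (Fintype.card {B : AltMap p n // IsBad B H ∧ 4 ≤ finrank (ZMod p) H} : ℝ)
        ≤ g (finrank (ZMod p) H) := by
    intro H
    by_cases hc : 4 ≤ finrank (ZMod p) H ∧ finrank (ZMod p) H < n
    · have hmono : Fintype.card {B : AltMap p n // IsBad B H ∧ 4 ≤ finrank (ZMod p) H}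
          ≤ Nat.card {B : AltMap p n // IsBad B H} := by
        rw [← Nat.card_eq_fintype_card]
        refine Nat.card_le_card_of_injective (fun B => ⟨B.1, B.2.1⟩) ?_
        intro B B' h
        apply Subtype.ext
        have h2 := congrArg Subtype.val h
        exact h2
      have hb := card_bad_le hp hn H rfl hc.1 hc.2
      rw [hg]
      simp only [if_pos hc]
      calc (Fintype.card {B : AltMap p n // IsBad B H ∧ 4 ≤ finrank (ZMod p) H} : ℝ)
          ≤ (Nat.card {B : AltMap p n // IsBad B H} : ℝ) := by exact_mod_cast hmono
        _ ≤ _ := hb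
    · have hempty : IsEmpty {B : AltMap p n // IsBad B H ∧ 4 ≤ finrank (ZMod p) H} := by
        refine ⟨fun B => hc ⟨B.2.2, ?_⟩⟩
        refine lt_of_le_of_ne (hfrk H) fun heq => B.2.1.1 ?_
        apply Submodule.eq_top_of_finrank_eq
        rw [heq, finrank_fintype_fun_eq_card, Fintype.card_fin]
      rw [Fintype.card_eq_zero, hg]
      simp only [if_neg hc]
      norm_num
  have hmap : ∀ H ∈ (Finset.univ : Finset (Submodule (ZMod p) (Fin n → ZMod p))),
      finrank (ZMod p) H ∈ Finset.range (n + 1) := fun H _ =>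
    Finset.mem_range.2 (Nat.lt_succ_of_le (hfrk H))
  have hjbound : ∀ j ∈ Finset.range (n + 1),
      (Nat.card {H : Submodule (ZMod p) (Fin n → ZMod p) // finrank (ZMod p) H = j} : ℝ) * g j
        ≤ (if 4 ≤ j ∧ j < n then K else 0) := by
    intro j _
    by_cases hc : 4 ≤ j ∧ j < n
    · rw [if_pos hc, hg]
      simp only [if_pos hc]
      have hAlt : ((p : ℝ) ^ (n - 3)) ^ (∑ i ∈ Finset.range n, i)
          = (Nat.card (AltMap p n) : ℝ) := by
        rw [card_altMap hp.pos.ne', pairs_card_fin]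
        push_cast
        ring
      calc (Nat.card {H : Submodule (ZMod p) (Fin n → ZMod p) // finrank (ZMod p) H = j} : ℝ)
            * (4 * (p : ℝ) ^ ((j - 3) * (n - j))
              * ((p : ℝ) ^ ((j - 3) * ∑ i ∈ Finset.range j, i)
                * ((p : ℝ) ^ (n - 3)) ^ ((∑ i ∈ Finset.range n, i) - ∑ i ∈ Finset.range j, i)))
          ≤ (4 * (p : ℝ) ^ (j * (n - j)))
            * (4 * (p : ℝ) ^ ((j - 3) * (n - j))
              * ((p : ℝ) ^ ((j - 3) * ∑ i ∈ Finset.range j, i)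
                * ((p : ℝ) ^ (n - 3)) ^ ((∑ i ∈ Finset.range n, i) - ∑ i ∈ Finset.range j, i))) := by
            refine mul_le_mul_of_nonneg_right (card_grass_le hp hc.2.le) ?_
            positivity
        _ = 16 * ((p : ℝ) ^ (j * (n - j)) * ((p : ℝ) ^ ((j - 3) * (n - j))
              * ((p : ℝ) ^ ((j - 3) * ∑ i ∈ Finset.range j, i)
                * ((p : ℝ) ^ (n - 3)) ^ ((∑ i ∈ Finset.range n, i) - ∑ i ∈ Finset.range j, i)))) := by
            ring
        _ ≤ 16 * ((p : ℝ) ^ ((4 : ℤ) - (n : ℤ))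
              * ((p : ℝ) ^ (n - 3)) ^ (∑ i ∈ Finset.range n, i)) := by
            have hexp := exponent_le (p := p) (n := n) hp.two_le hn hc.1 hc.2
            linarith
        _ = K := by rw [hK, hAlt]; ring
    · rw [if_neg hc, hg]
      simp only [if_neg hc]
      rw [mul_zero]
  have hfilter : (Finset.range (n + 1)).filter (fun j => 4 ≤ j ∧ j < n) = Finset.Ico 4 n := by
    ext j
    simp only [Finset.mem_filter, Finset.mem_range, Finset.mem_Ico]
    omega
  calc ((∑ H : Submodule (ZMod p) (Fin n → ZMod p),
        Fintype.card {B : AltMap p n // IsBad B H ∧ 4 ≤ finrank (ZMod p) H} : ℕ) : ℝ)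
      = ∑ H : Submodule (ZMod p) (Fin n → ZMod p),
          (Fintype.card {B : AltMap p n // IsBad B H ∧ 4 ≤ finrank (ZMod p) H} : ℝ) := by
        push_cast
        rfl
    _ ≤ ∑ H : Submodule (ZMod p) (Fin n → ZMod p), g (finrank (ZMod p) H) :=
        Finset.sum_le_sum fun H _ => hHbound H
    _ = ∑ j ∈ Finset.range (n + 1), ∑ H ∈ Finset.univ.filter
          (fun H : Submodule (ZMod p) (Fin n → ZMod p) => finrank (ZMod p) H = j),
          g (finrank (ZMod p) H) :=
        (Finset.sum_fiberwise_of_maps_to hmap _).symm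
    _ = ∑ j ∈ Finset.range (n + 1),
          (Nat.card {H : Submodule (ZMod p) (Fin n → ZMod p) // finrank (ZMod p) H = j} : ℝ)
            * g j := by
        refine Finset.sum_congr rfl fun j hj => ?_
        rw [Finset.sum_congr rfl (fun H hH => by rw [(Finset.mem_filter.1 hH).2]),
          Finset.sum_const, Nat.card_eq_fintype_card, Fintype.card_subtype, nsmul_eq_mul]
    _ ≤ ∑ j ∈ Finset.range (n + 1), (if 4 ≤ j ∧ j < n then K else 0) :=
        Finset.sum_le_sum hjbound
    _ = ∑ j ∈ (Finset.range (n + 1)).filter (fun j => 4 ≤ j ∧ j < n), K :=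
        (Finset.sum_filter _ _).symm
    _ = ((n - 4 : ℕ) : ℝ) * K := by
        rw [Finset.sum_const, hfilter, Nat.card_Ico, nsmul_eq_mul]
    _ = 16 * ((n : ℝ) - 4) * (p : ℝ) ^ ((4 : ℤ) - (n : ℤ)) * (Nat.card (AltMap p n) : ℝ) := by
        rw [Nat.cast_sub (by omega : 4 ≤ n), hK]
        push_cast
        ring

include hp in
lemma altMap_card_pos : 0 < Nat.card (AltMap p n) := by
  haveI : Finite (AltMap p n) := AltMap.finite hp.pos.ne'
  haveI : Nonempty (AltMap p n) := ⟨⟨0, fun v => rfl⟩⟩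
  exact Nat.card_pos

include hp in
lemma expected_le (hn : 5 ≤ n) :
    expectedBadCount p n ≤ 16 * ((n : ℝ) - 4) * (p : ℝ) ^ ((4 : ℤ) - (n : ℤ)) := by
  haveI : Finite (AltMap p n) := AltMap.finite hp.pos.ne'
  have hpos : (0 : ℝ) < Nat.card (AltMap p n) := by exact_mod_cast altMap_card_pos hp
  rw [expectedBadCount, div_le_iff₀ hpos]
  exact main_bound hp hn

end Prime

lemma expected_nonneg (p n : ℕ) : 0 ≤ expectedBadCount p n :=
  div_nonneg (Nat.cast_nonneg _) (Nat.cast_nonneg _)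

lemma tendsto_in_m (q : ℕ) (hq : q.Prime) :
    Tendsto (fun m : ℕ => expectedBadCount q m) atTop (nhds 0) := by
  have hq1 : (1 : ℝ) < q := by exact_mod_cast hq.one_lt
  have hq0 : (0 : ℝ) < q := lt_trans one_pos hq1
  have hb : Tendsto (fun m : ℕ => 16 * ((m : ℝ) - 4) * (q : ℝ) ^ ((4 : ℤ) - (m : ℤ)))
      atTop (nhds 0) := by
    have h1 : Tendsto (fun m : ℕ => (m : ℝ) ^ 1 * ((q : ℝ)⁻¹) ^ m) atTop (nhds 0) :=
      tendsto_pow_const_mul_const_pow_of_lt_one 1 (by positivity) (inv_lt_one_of_one_lt₀ hq1)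
    have h2 : Tendsto (fun m : ℕ => ((q : ℝ)⁻¹) ^ m) atTop (nhds 0) :=
      tendsto_pow_atTop_nhds_zero_of_lt_one (by positivity) (inv_lt_one_of_one_lt₀ hq1)
    have heq : ∀ m : ℕ, 16 * ((m : ℝ) - 4) * (q : ℝ) ^ ((4 : ℤ) - (m : ℤ))
        = (16 * (q : ℝ) ^ (4 : ℤ)) * ((m : ℝ) ^ 1 * ((q : ℝ)⁻¹) ^ m)
          - (64 * (q : ℝ) ^ (4 : ℤ)) * ((q : ℝ)⁻¹) ^ m := by
      intro m
      have hz : (q : ℝ) ^ ((4 : ℤ) - (m : ℤ)) = (q : ℝ) ^ (4 : ℤ) * ((q : ℝ)⁻¹) ^ m := by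
        rw [zpow_sub₀ (ne_of_gt hq0), div_eq_mul_inv, zpow_natCast, ← inv_pow]
      rw [hz]
      ring
    have hcomb := (h1.const_mul (16 * (q : ℝ) ^ (4 : ℤ))).sub
      (h2.const_mul (64 * (q : ℝ) ^ (4 : ℤ)))
    rw [mul_zero, mul_zero, sub_zero] at hcomb
    exact Tendsto.congr (fun m => (heq m).symm) hcomb
  refine tendsto_of_tendsto_of_tendsto_of_le_of_le' tendsto_const_nhds hb ?_ ?_
  · exact Eventually.of_forall fun m => expected_nonneg q m
  · filter_upwards [eventually_ge_atTop 5] with m hm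
    exact expected_le hq hm

lemma tendsto_in_q (m : ℕ) (hm : 5 ≤ m) :
    Tendsto (fun q : ℕ => expectedBadCount q m)
      (atTop ⊓ Filter.principal {q | q.Prime}) (nhds 0) := by
  have hb : Tendsto (fun q : ℕ => 16 * ((m : ℝ) - 4) / (q : ℝ)) atTop (nhds 0) :=
    tendsto_const_div_atTop_nhds_zero_nat _
  refine tendsto_of_tendsto_of_tendsto_of_le_of_le' tendsto_const_nhds
    (hb.mono_left inf_le_left) ?_ ?_
  · exact Eventually.of_forall fun q => expected_nonneg q m
  · have h2 : ∀ᶠ q : ℕ in atTop ⊓ Filter.principal {q | q.Prime}, q.Prime := by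
      apply Filter.eventually_inf_principal.2
      exact Eventually.of_forall fun q hq => hq
    filter_upwards [h2] with q hq
    have hq1 : (1 : ℝ) ≤ q := by exact_mod_cast hq.one_lt.le
    have hm4 : (0 : ℝ) ≤ 16 * ((m : ℝ) - 4) := by
      have : (5 : ℝ) ≤ m := by exact_mod_cast hm
      linarith
    have hq0 : (0 : ℝ) < q := by
      have : (2 : ℝ) ≤ q := by exact_mod_cast hq.two_le
      linarith
    calc expectedBadCount q m
        ≤ 16 * ((m : ℝ) - 4) * (q : ℝ) ^ ((4 : ℤ) - (m : ℤ)) := expected_le hq hm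
      _ ≤ 16 * ((m : ℝ) - 4) * (q : ℝ) ^ (-1 : ℤ) := by
          apply mul_le_mul_of_nonneg_left _ hm4
          apply zpow_le_zpow_right₀ hq1
          have h5 : (5 : ℤ) ≤ (m : ℤ) := by exact_mod_cast hm
          omega
      _ = 16 * ((m : ℝ) - 4) / (q : ℝ) := by
          rw [zpow_neg_one, div_eq_mul_inv]

end Aux

/-- Let `p` be a prime and `n ≥ 5`. The sum, over all alternating bilinear maps
`B : F_p^n × F_p^n → F_p^{n-3}`, of the number of bad subspaces for `B` of dimension
at least `4` (equivalently, the number of pairs `(B, H)` with `H` bad of dimension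
`≥ 4`) is at most `16 (n - 4) p ^ (4 - n)` times the total number of alternating
bilinear maps.  In particular, the expected number of bad subspaces of dimension at
least `4` for a uniformly random alternating bilinear map tends to `0` as either
`n → ∞` or `p → ∞`. -/
theorem expected_high_dim_bad_subspaces (p n : ℕ) (hp : p.Prime) (hn : 5 ≤ n) :
    ((Nat.card {x : AltMap p n × Submodule (ZMod p) (Fin n → ZMod p) //
          IsBad x.1 x.2 ∧ 4 ≤ Module.finrank (ZMod p) ↥x.2} : ℝ) ≤
        16 * ((n : ℝ) - 4) * (p : ℝ) ^ ((4 : ℤ) - (n : ℤ)) * Nat.card (AltMap p n)) ∧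
      (∀ q : ℕ, q.Prime →
        Tendsto (fun m : ℕ => expectedBadCount q m) atTop (nhds 0)) ∧
      (∀ m : ℕ, 5 ≤ m →
        Tendsto (fun q : ℕ => expectedBadCount q m)
          (atTop ⊓ Filter.principal {q | q.Prime}) (nhds 0)) :=
  ⟨main_bound hp hn, fun q hq => tendsto_in_m q hq, fun m hm => tendsto_in_q m hm⟩
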